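/- Let d be a positive integer, let p be a positive integer, and let ℓ₁, …, ℓ_p be positive integers with ℓ_i ≤ d / 2^{i-1} (as reals) for each i. Then the product ∏_{i=1}^p (2d choose ℓ_i) is at most 2^{c·d} where c = 2√2 · ∑_{i≥0} 2^{-i/2} (a fixed absolute constant); in particular ∏_{i=1}^p (2d choose ℓ_i) ≤ 2^{10 d}. -/

import Mathlib

lemma my_pow_div_factorial_le_exp (x : ℝ) (hx : 0 ≤ x) (n : ℕ) :
    x ^ n / n.factorial ≤ Real.exp x := by
  have h := Real.sum_le_exp_of_nonneg hx (n + 1)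
  refine le_trans ?_ h
  have : x ^ n / n.factorial = ∑ i ∈ {n}, x ^ i / i.factorial := by simp
  rw [this]
  refine Finset.sum_le_sum_of_subset_of_nonneg (by simp) ?_
  intro i _ _
  positivity

lemma choose_le_exp (d i L : ℕ) (hd : 0 < d) (hL : 0 < L)
    (hle : (L : ℝ) ≤ (d : ℝ) / 2 ^ i) :
    ((2 * d).choose L : ℝ) ≤
      Real.exp ((d : ℝ) / 2 ^ i * (1 + Real.log 2 + i * Real.log 2)) := by
  set x : ℝ := (d : ℝ) / 2 ^ i with hx
  have hdpos : (0:ℝ) < d := by exact_mod_cast hd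
  have hxpos : 0 < x := by positivity
  have hLpos : (0:ℝ) < L := by exact_mod_cast hL
  have hnpos : (0:ℝ) < 2 * d := by linarith
  have h1 : ((2 * d).choose L : ℝ) ≤ (2 * d : ℝ) ^ L / L.factorial := by
    have := Nat.choose_le_pow_div (α := ℝ) L (2 * d)
    push_cast at this ⊢
    exact this
  have h2 : (2 * d : ℝ) ^ L / L.factorial ≤ Real.exp ((L : ℝ) * (Real.log (2 * d / L) + 1)) := by
    have hquot : (0:ℝ) < 2 * d / L := by positivity
    have hLL : (L : ℝ) ^ L / L.factorial ≤ Real.exp L :=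
      my_pow_div_factorial_le_exp _ (le_of_lt hLpos) L
    have hfacpos : (0:ℝ) < L.factorial := by positivity
    have key : (2 * d : ℝ) ^ L / L.factorial
        = (2 * d / L) ^ L * ((L : ℝ) ^ L / L.factorial) := by
      field_simp
      rw [← mul_pow, div_mul_cancel₀ _ hLpos.ne']
    rw [key]
    have hb : (2 * d / L : ℝ) ^ L = Real.exp ((L : ℝ) * Real.log (2 * d / L)) := by
      rw [← Real.exp_log hquot, ← Real.exp_nat_mul]
      norm_num
    calc (2 * d / L : ℝ) ^ L * ((L : ℝ) ^ L / L.factorial)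
        ≤ (2 * d / L : ℝ) ^ L * Real.exp L := by
          apply mul_le_mul_of_nonneg_left hLL (by positivity)
      _ = Real.exp ((L : ℝ) * (Real.log (2 * d / L) + 1)) := by
          rw [hb, ← Real.exp_add]; ring_nf
  have h3 : (L : ℝ) * (Real.log (2 * d / L) + 1) ≤ x * (Real.log (2 * d / x) + 1) := by
    have hsplit : Real.log (2 * d / L) = Real.log (2 * d / x) + Real.log (x / L) := by
      rw [← Real.log_mul (by positivity) (by positivity)]
      congr 1
      field_simp
    have hlog1 : Real.log (x / L) ≤ x / L - 1 :=
      Real.log_le_sub_one_of_pos (by positivity)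
    have hlog2 : 0 ≤ Real.log (2 * d / x) := by
      apply Real.log_nonneg
      have h2i : (1:ℝ) ≤ 2 ^ i := one_le_pow₀ (by norm_num)
      have hxd : x ≤ d := div_le_self hdpos.le h2i
      rw [le_div_iff₀ hxpos]
      nlinarith
    have hxL : (L : ℝ) ≤ x := hle
    have e1 : (L : ℝ) * Real.log (x / L) ≤ x - L := by
      have := mul_le_mul_of_nonneg_left hlog1 (le_of_lt hLpos)
      calc (L : ℝ) * Real.log (x / L) ≤ L * (x / L - 1) := this
        _ = x - L := by field_simp
    calc (L : ℝ) * (Real.log (2 * d / L) + 1)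
        = L * (Real.log (2 * d / x) + 1) + L * Real.log (x / L) := by rw [hsplit]; ring
      _ ≤ L * (Real.log (2 * d / x) + 1) + (x - L) := by linarith
      _ ≤ x * (Real.log (2 * d / x) + 1) := by nlinarith
  have h4 : Real.log (2 * d / x) = Real.log 2 + i * Real.log 2 := by
    have : (2 * d / x : ℝ) = 2 * 2 ^ i := by
      rw [hx]; field_simp
    rw [this, Real.log_mul (by norm_num) (by positivity), Real.log_pow]
  calc ((2 * d).choose L : ℝ) ≤ (2 * d : ℝ) ^ L / L.factorial := h1
    _ ≤ Real.exp ((L : ℝ) * (Real.log (2 * d / L) + 1)) := h2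
    _ ≤ Real.exp (x * (Real.log (2 * d / x) + 1)) := Real.exp_le_exp.mpr h3
    _ = Real.exp (x * (1 + Real.log 2 + i * Real.log 2)) := by rw [h4]; ring_nf

lemma sum_geo_half (n : ℕ) : ∑ i ∈ Finset.range n, (1:ℝ)/2^i = 2 - 2/2^n := by
  induction n with
  | zero => norm_num
  | succ n ih =>
      rw [Finset.sum_range_succ, ih]
      have h : (0:ℝ) < 2 ^ n := by positivity
      field_simp
      ring

lemma sum_lin_half (n : ℕ) : ∑ i ∈ Finset.range n, (i:ℝ)/2^i = 2 - (2*n+2)/2^n := by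
  induction n with
  | zero => norm_num
  | succ n ih =>
      rw [Finset.sum_range_succ, ih]
      have h : (0:ℝ) < 2 ^ n := by positivity
      push_cast
      field_simp
      ring

lemma tsum_half_pow : ∑' i : ℕ, (2 : ℝ) ^ (-(i : ℝ) / 2) = 2 + Real.sqrt 2 := by
  have hterm : ∀ i : ℕ, (2 : ℝ) ^ (-(i : ℝ) / 2) = ((2:ℝ) ^ (-(1:ℝ)/2)) ^ i := by
    intro i
    rw [← Real.rpow_natCast ((2:ℝ) ^ (-(1:ℝ)/2)) i, ← Real.rpow_mul (by norm_num)]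
    congr 1
    ring
  have hr0 : (0:ℝ) ≤ (2:ℝ) ^ (-(1:ℝ)/2) := by positivity
  have hr1 : (2:ℝ) ^ (-(1:ℝ)/2) < 1 :=
    Real.rpow_lt_one_of_one_lt_of_neg one_lt_two (by norm_num)
  calc ∑' i : ℕ, (2 : ℝ) ^ (-(i : ℝ) / 2)
      = ∑' i : ℕ, ((2:ℝ) ^ (-(1:ℝ)/2)) ^ i := by exact tsum_congr hterm
    _ = (1 - (2:ℝ) ^ (-(1:ℝ)/2))⁻¹ := tsum_geometric_of_lt_one hr0 hr1
    _ = 2 + Real.sqrt 2 := by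
        have hs : (2:ℝ) ^ (-(1:ℝ)/2) = (Real.sqrt 2)⁻¹ := by
          rw [show (-(1:ℝ)/2) = -(1/2) by ring, Real.rpow_neg (by norm_num),
            ← Real.sqrt_eq_rpow]
        rw [hs]
        have h2 : Real.sqrt 2 ^ 2 = 2 := Real.sq_sqrt (by norm_num)
        have hp : 0 < Real.sqrt 2 := Real.sqrt_pos.mpr (by norm_num)
        have hne : Real.sqrt 2 - 1 ≠ 0 := by nlinarith
        field_simp
        nlinarith

/-- Bound on the product of binomial coefficients along the recursion tree:
if `ℓ₁,…,ℓ_p` are positive integers with `ℓ_i ≤ d / 2^(i-1)`, then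
`∏ (2d choose ℓ_i) ≤ 2^(c·d)` for `c = 2√2 · ∑_{i≥0} 2^{-i/2}`, and in
particular the product is at most `2^(10d)`. -/
theorem prod_choose_le
    (d p : ℕ) (hd : 0 < d) (hp : 0 < p) (ℓ : Fin p → ℕ)
    (hpos : ∀ i, 0 < ℓ i)
    (hle : ∀ i : Fin p, (ℓ i : ℝ) ≤ (d : ℝ) / 2 ^ (i : ℕ)) :
    ((∏ i : Fin p, (2 * d).choose (ℓ i) : ℕ) : ℝ) ≤
        (2 : ℝ) ^ ((2 * Real.sqrt 2 * ∑' i : ℕ, (2 : ℝ) ^ (-(i : ℝ) / 2)) * d) ∧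
    ((∏ i : Fin p, (2 * d).choose (ℓ i) : ℕ) : ℝ) ≤ (2 : ℝ) ^ (10 * d) := by
  have hsq2 : Real.sqrt 2 ^ 2 = 2 := Real.sq_sqrt (by norm_num)
  have hsq14 : (1.4:ℝ) ≤ Real.sqrt 2 := by
    rw [show (1.4:ℝ) = Real.sqrt 1.96 by
      rw [show (1.96:ℝ) = 1.4^2 by norm_num, Real.sqrt_sq (by norm_num)]]
    exact Real.sqrt_le_sqrt (by norm_num)
  have hsq15 : Real.sqrt 2 ≤ 1.5 := by
    nlinarith [Real.sqrt_nonneg 2]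
  have hlog2 : (0.6931471803 : ℝ) < Real.log 2 := Real.log_two_gt_d9
  have hlog2' : Real.log 2 < 0.6931471808 := Real.log_two_lt_d9
  have hdpos : (0:ℝ) < d := by exact_mod_cast hd
  -- main estimate: product ≤ exp (d * (2 + 4 log 2))
  have hmain : ((∏ i : Fin p, (2 * d).choose (ℓ i) : ℕ) : ℝ) ≤
      Real.exp ((d:ℝ) * (2 + 4 * Real.log 2)) := by
    have hcast : ((∏ i : Fin p, (2 * d).choose (ℓ i) : ℕ) : ℝ)
        = ∏ i : Fin p, ((2 * d).choose (ℓ i) : ℝ) := by push_cast; rfl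
    rw [hcast]
    have hstep : ∏ i : Fin p, ((2 * d).choose (ℓ i) : ℝ) ≤
        ∏ i : Fin p, Real.exp ((d : ℝ) / 2 ^ (i:ℕ) * (1 + Real.log 2 + (i:ℕ) * Real.log 2)) := by
      apply Finset.prod_le_prod
      · intro i _; positivity
      · intro i _
        exact choose_le_exp d i (ℓ i) hd (hpos i) (hle i)
    refine hstep.trans ?_
    rw [← Real.exp_sum]
    apply Real.exp_le_exp.mpr
    have expand : ∀ i : ℕ, (d:ℝ) / 2 ^ i * (1 + Real.log 2 + i * Real.log 2)
        = ((d:ℝ) * (1 + Real.log 2)) * (1/2^i) + ((d:ℝ) * Real.log 2) * ((i:ℝ)/2^i) := by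
      intro i
      have h : (0:ℝ) < 2 ^ i := by positivity
      field_simp
    rw [Fin.sum_univ_eq_sum_range
        (fun i => (d : ℝ) / 2 ^ i * (1 + Real.log 2 + (i:ℕ) * Real.log 2)),
      Finset.sum_congr rfl (fun i _ => expand i), Finset.sum_add_distrib,
      ← Finset.mul_sum, ← Finset.mul_sum, sum_geo_half, sum_lin_half]
    have h1 : (0:ℝ) ≤ 2/2^p := by positivity
    have h2 : (0:ℝ) ≤ (2*(p:ℝ)+2)/2^p := by positivity
    have hl0 : (0:ℝ) < Real.log 2 := by linarith
    nlinarith [mul_le_mul_of_nonneg_left h1 (by positivity : (0:ℝ) ≤ (d:ℝ)*(1+Real.log 2)),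
      mul_le_mul_of_nonneg_left h2 (by positivity : (0:ℝ) ≤ (d:ℝ)*Real.log 2)]
  constructor
  · rw [tsum_half_pow]
    rw [Real.rpow_def_of_pos (by norm_num : (0:ℝ) < 2)]
    refine hmain.trans (Real.exp_le_exp.mpr ?_)
    have hc : 2 * Real.sqrt 2 * (2 + Real.sqrt 2) = 4 * Real.sqrt 2 + 4 := by nlinarith
    rw [hc]
    have key : 2 + 4 * Real.log 2 ≤ Real.log 2 * (4 * Real.sqrt 2 + 4) := by nlinarith
    calc (d:ℝ) * (2 + 4 * Real.log 2) ≤ (d:ℝ) * (Real.log 2 * (4 * Real.sqrt 2 + 4)) :=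
          mul_le_mul_of_nonneg_left key hdpos.le
      _ = Real.log 2 * ((4 * Real.sqrt 2 + 4) * d) := by ring
  · have h10 : ((2:ℝ) ^ (10 * d) : ℝ) = (2:ℝ) ^ ((10 * d : ℕ) : ℝ) := by
      rw [Real.rpow_natCast]
    rw [h10]
    refine hmain.trans ?_
    rw [Real.rpow_def_of_pos (by norm_num : (0:ℝ) < 2)]
    apply Real.exp_le_exp.mpr
    push_cast
    have key : 2 + 4 * Real.log 2 ≤ Real.log 2 * 10 := by nlinarith
    calc (d:ℝ) * (2 + 4 * Real.log 2) ≤ (d:ℝ) * (Real.log 2 * 10) :=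
          mul_le_mul_of_nonneg_left key hdpos.le
      _ = Real.log 2 * (10 * d) := by ring
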